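/- Let D > 0, α ∈ ℝ and 0 < l₁ < l₂. Suppose φ₁ : [0, l₁] → ℝ and φ₂ : [0, l₂] → ℝ are twice continuously differentiable and satisfy −D φ₁'' + α φ₁' = λ₁ φ₁ on [0, l₁] and −D φ₂'' + α φ₂' = λ₂ φ₂ on [0, l₂], with φ₁'(0) = φ₂'(0) = 0, φ₁(l₁) = 0, φ₂(l₂) = 0, φ₁(x) > 0 for x ∈ [0, l₁), φ₂(x) > 0 for x ∈ [0, l₂), and φ₁'(l₁) < 0. Then λ₁ > λ₂. (In other words, the principal eigenvalue λ*(D, α, (0,l)) is strictly decreasing in the habitat length l.) -/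

import Mathlib

theorem stmt_3 (D α l₁ l₂ lam₁ lam₂ : ℝ) (φ₁ φ₂ φ₁' φ₂' φ₁'' φ₂'' : ℝ → ℝ)
    (hD : 0 < D) (hl₁ : 0 < l₁) (hl₁₂ : l₁ < l₂)
    (hd₁ : ∀ x ∈ Set.Icc (0:ℝ) l₁, HasDerivAt φ₁ (φ₁' x) x)
    (hd₁' : ∀ x ∈ Set.Icc (0:ℝ) l₁, HasDerivAt φ₁' (φ₁'' x) x)
    (hd₂ : ∀ x ∈ Set.Icc (0:ℝ) l₂, HasDerivAt φ₂ (φ₂' x) x)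
    (hd₂' : ∀ x ∈ Set.Icc (0:ℝ) l₂, HasDerivAt φ₂' (φ₂'' x) x)
    (hc₁ : ContinuousOn φ₁'' (Set.Icc (0:ℝ) l₁))
    (hc₂ : ContinuousOn φ₂'' (Set.Icc (0:ℝ) l₂))
    (hode₁ : ∀ x ∈ Set.Icc (0:ℝ) l₁, -D * φ₁'' x + α * φ₁' x = lam₁ * φ₁ x)
    (hode₂ : ∀ x ∈ Set.Icc (0:ℝ) l₂, -D * φ₂'' x + α * φ₂' x = lam₂ * φ₂ x)
    (hb₁ : φ₁' 0 = 0) (hb₂ : φ₂' 0 = 0)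
    (hz₁ : φ₁ l₁ = 0) (hz₂ : φ₂ l₂ = 0)
    (hp₁ : ∀ x ∈ Set.Ico (0:ℝ) l₁, 0 < φ₁ x)
    (hp₂ : ∀ x ∈ Set.Ico (0:ℝ) l₂, 0 < φ₂ x)
    (hHopf : φ₁' l₁ < 0) :
    lam₂ < lam₁ := by
  by_contra hle
  push_neg at hle
  set c : ℝ := α / D with hc
  set W : ℝ → ℝ := fun x => Real.exp (-(c * x)) * (φ₁' x * φ₂ x - φ₁ x * φ₂' x) with hW
  -- derivative of W on Icc 0 l₁
  have key : ∀ x ∈ Set.Icc (0:ℝ) l₁,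
      HasDerivAt W (((lam₂ - lam₁) / D) * Real.exp (-(c * x)) * (φ₁ x * φ₂ x)) x := by
    intro x hx
    have hx2 : x ∈ Set.Icc (0:ℝ) l₂ := ⟨hx.1, hx.2.trans hl₁₂.le⟩
    have hexp : HasDerivAt (fun x => Real.exp (-(c * x))) (-c * Real.exp (-(c * x))) x := by
      have h1 : HasDerivAt (fun x : ℝ => -(c * x)) (-c) x := by
        have h0 := ((hasDerivAt_id x).const_mul c).neg
        simp only [mul_one, id] at h0
        exact h0
      simpa [mul_comm] using h1.exp
    have hin : HasDerivAt (fun x => φ₁' x * φ₂ x - φ₁ x * φ₂' x)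
        ((φ₁'' x * φ₂ x + φ₁' x * φ₂' x) - (φ₁' x * φ₂' x + φ₁ x * φ₂'' x)) x :=
      ((hd₁' x hx).mul (hd₂ x hx2)).sub ((hd₁ x hx).mul (hd₂' x hx2))
    have hmul := hexp.mul hin
    convert hmul using 1
    · rfl
    · rfl
    · rfl
    have e1 := hode₁ x hx
    have e2 := hode₂ x hx2
    have hDne : D ≠ 0 := ne_of_gt hD
    set E := Real.exp (-(c * x)) with hE
    rw [hc]
    field_simp
    linear_combination E * (φ₂ x * e1 - φ₁ x * e2)
  have hmono : MonotoneOn W (Set.Icc (0:ℝ) l₁) := by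
    apply monotoneOn_of_hasDerivWithinAt_nonneg (convex_Icc 0 l₁)
      (f' := fun x => ((lam₂ - lam₁) / D) * Real.exp (-(c * x)) * (φ₁ x * φ₂ x))
    · exact fun x hx => (key x hx).continuousAt.continuousWithinAt
    · intro x hx
      rw [interior_Icc] at hx
      exact (key x (Set.Ioo_subset_Icc_self hx)).hasDerivWithinAt
    · intro x hx
      rw [interior_Icc] at hx
      have h1 : 0 < φ₁ x := hp₁ x ⟨hx.1.le, hx.2⟩
      have h2 : 0 < φ₂ x := hp₂ x ⟨hx.1.le, hx.2.trans hl₁₂⟩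
      have h3 : 0 ≤ (lam₂ - lam₁) / D := div_nonneg (by linarith) hD.le
      positivity
  have hW0 : W 0 = 0 := by simp [hW, hb₁, hb₂]
  have hWl : W l₁ < 0 := by
    have h2 : 0 < φ₂ l₁ := hp₂ l₁ ⟨hl₁.le, hl₁₂⟩
    have : φ₁' l₁ * φ₂ l₁ - φ₁ l₁ * φ₂' l₁ < 0 := by
      rw [hz₁]; nlinarith
    simp only [hW]
    exact mul_neg_of_pos_of_neg (Real.exp_pos _) this
  have := hmono (Set.left_mem_Icc.2 hl₁.le) (Set.right_mem_Icc.2 hl₁.le) hl₁.le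
  linarith
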